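/- Let K be a field of characteristic ≠ 2 and f ∈ K* a non-square. Let σ = [[0, f],[1, 0]] ∈ PGL(2,K). Then the normalizer N_σ of the subgroup ⟨σ⟩ in PGL(2,K) is the set of classes of matrices of the form [[a, bf],[b, a]] or [[a, −bf],[b, −a]] with a, b ∈ K not both zero. -/

import Mathlib

open Matrix

/-- `PGL(2, K)`, the quotient of `GL(2, K)` by its centre (the scalar matrices). -/
abbrev PGL2 (K : Type*) [Field K] : Type _ :=
  GL (Fin 2) K ⧸ Subgroup.center (GL (Fin 2) K)

/-- The class in `PGL(2, K)` of a matrix with non-zero determinant. -/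
noncomputable def pgl2 {K : Type*} [Field K] (M : Matrix (Fin 2) (Fin 2) K)
    (h : M.det ≠ 0) : PGL2 K :=
  QuotientGroup.mk (Matrix.GeneralLinearGroup.mkOfDetNeZero M h)

/-- The class of `[[0, f], [1, 0]]` in `PGL(2, K)`. -/
noncomputable def sigmaPGL {K : Type*} [Field K] (f : Kˣ) : PGL2 K :=
  pgl2 !![0, (f : K); 1, 0] (by simp [Matrix.det_fin_two_of])

section Aux

variable {K : Type*} [Field K]

lemma aux_mem_center_iff (g : GL (Fin 2) K) :
    g ∈ Subgroup.center (GL (Fin 2) K) ↔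
      ∃ c : K, (g : Matrix (Fin 2) (Fin 2) K) = c • (1 : Matrix (Fin 2) (Fin 2) K) := by
  constructor
  · intro h
    rw [Subgroup.mem_center_iff] at h
    set T1 : GL (Fin 2) K := Matrix.GeneralLinearGroup.mkOfDetNeZero !![1,1;0,1]
      (by simp [Matrix.det_fin_two_of]) with hT1
    set T2 : GL (Fin 2) K := Matrix.GeneralLinearGroup.mkOfDetNeZero !![1,0;1,1]
      (by simp [Matrix.det_fin_two_of]) with hT2
    have e1 : (!![1,1;0,1] : Matrix (Fin 2) (Fin 2) K) * (g : Matrix (Fin 2) (Fin 2) K) =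
        (g : Matrix (Fin 2) (Fin 2) K) * !![1,1;0,1] := congrArg Units.val (h T1)
    have e2 : (!![1,0;1,1] : Matrix (Fin 2) (Fin 2) K) * (g : Matrix (Fin 2) (Fin 2) K) =
        (g : Matrix (Fin 2) (Fin 2) K) * !![1,0;1,1] := congrArg Units.val (h T2)
    set M : Matrix (Fin 2) (Fin 2) K := (g : Matrix (Fin 2) (Fin 2) K) with hM
    have a1 := congrFun (congrFun e1 0) 0
    have a2 := congrFun (congrFun e1 0) 1
    have a3 := congrFun (congrFun e2 0) 0
    simp [Matrix.mul_apply, Fin.sum_univ_two] at a1 a2 a3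
    refine ⟨M 0 0, ?_⟩
    ext i j
    fin_cases i <;> fin_cases j <;> simp [Matrix.one_apply] <;>
      first | exact a3 | exact a1 | linear_combination a2
  · rintro ⟨c, hc⟩
    rw [Subgroup.mem_center_iff]
    intro b
    ext : 1
    rw [Units.val_mul, Units.val_mul, hc, mul_smul_comm, smul_mul_assoc, mul_one, one_mul]

lemma aux_mk_eq_mk_iff (g h : GL (Fin 2) K) :
    (QuotientGroup.mk g : PGL2 K) = QuotientGroup.mk h ↔
      ∃ c : K, c ≠ 0 ∧ (h : Matrix (Fin 2) (Fin 2) K) = c • (g : Matrix (Fin 2) (Fin 2) K) := by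
  rw [QuotientGroup.eq, aux_mem_center_iff]
  constructor
  · rintro ⟨c, hc⟩
    have hval : (h : Matrix (Fin 2) (Fin 2) K) = c • (g : Matrix (Fin 2) (Fin 2) K) := by
      have h1 : g * (g⁻¹ * h) = h := by group
      calc (h : Matrix (Fin 2) (Fin 2) K)
          = ((g * (g⁻¹ * h) : GL (Fin 2) K) : Matrix (Fin 2) (Fin 2) K) := by rw [h1]
        _ = (g : Matrix (Fin 2) (Fin 2) K) * ((g⁻¹ * h : GL (Fin 2) K) : Matrix (Fin 2) (Fin 2) K) :=
            Units.val_mul _ _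
        _ = (g : Matrix (Fin 2) (Fin 2) K) * (c • 1) := by rw [hc]
        _ = c • (g : Matrix (Fin 2) (Fin 2) K) := by rw [mul_smul_comm, mul_one]
    refine ⟨c, ?_, hval⟩
    rintro rfl
    rw [zero_smul] at hval
    exact not_isUnit_zero (hval ▸ h.isUnit)
  · rintro ⟨c, -, hval⟩
    refine ⟨c, ?_⟩
    calc ((g⁻¹ * h : GL (Fin 2) K) : Matrix (Fin 2) (Fin 2) K)
        = ((g⁻¹ : GL (Fin 2) K) : Matrix (Fin 2) (Fin 2) K) * (h : Matrix (Fin 2) (Fin 2) K) :=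
          Units.val_mul _ _
      _ = c • (((g⁻¹ : GL (Fin 2) K) : Matrix (Fin 2) (Fin 2) K) * (g : Matrix (Fin 2) (Fin 2) K)) := by
          rw [hval, mul_smul_comm]
      _ = c • (1 : Matrix (Fin 2) (Fin 2) K) := by rw [← Units.val_mul, inv_mul_cancel, Units.val_one]

lemma aux_norm_iff {G : Type*} [Group G] {σ : G} (h1 : σ * σ = 1) (h2 : σ ≠ 1) (x : G) :
    x ∈ Subgroup.normalizer (Subgroup.zpowers σ) ↔ x * σ = σ * x := by
  have key2 : σ ^ (2 : ℤ) = 1 := by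
    rw [show (2 : ℤ) = 1 + 1 by norm_num, _root_.zpow_add, zpow_one, h1]
  have hmem : ∀ y : G, y ∈ Subgroup.zpowers σ ↔ y = 1 ∨ y = σ := by
    intro y
    constructor
    · rintro ⟨n, rfl⟩
      rcases Int.even_or_odd n with ⟨k, hk⟩ | ⟨k, hk⟩
      · left
        show σ ^ n = 1
        rw [hk, show k + k = 2 * k by ring, _root_.zpow_mul, key2, _root_.one_zpow]
      · right
        show σ ^ n = σ
        rw [hk, _root_.zpow_add, _root_.zpow_mul, key2, _root_.one_zpow, one_mul, zpow_one]
    · rintro (rfl | rfl)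
      · exact Subgroup.one_mem _
      · exact Subgroup.mem_zpowers _
  constructor
  · intro hx
    have hconj := (Subgroup.mem_normalizer_iff.mp hx σ).mp (Subgroup.mem_zpowers σ)
    rcases (hmem _).mp hconj with hc | hc
    · exfalso
      apply h2
      have : σ = x⁻¹ * (x * σ * x⁻¹) * x := by group
      rw [hc] at this
      simpa using this
    · calc x * σ = (x * σ * x⁻¹) * x := by group
        _ = σ * x := by rw [hc]
  · intro hc
    have hcom : Commute x σ := hc
    rw [Subgroup.mem_normalizer_iff]
    intro y
    constructor
    · intro hy
      rcases (hmem _).mp hy with hc1 | hc1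
      · rw [hc1]; simpa using Subgroup.one_mem _
      · rw [hc1]
        have hconj : x * σ * x⁻¹ = σ := by
          rw [hcom.eq, mul_assoc, mul_inv_cancel, mul_one]
        rw [hconj]
        exact Subgroup.mem_zpowers _
    · intro hy
      rcases (hmem _).mp hy with hc1 | hc1
      · have : y = 1 := by
          have : y = x⁻¹ * (x * y * x⁻¹) * x := by group
          rw [hc1] at this
          simpa using this
        rw [this]; exact Subgroup.one_mem _
      · have : y = σ := by
          have h3 : y = x⁻¹ * (x * y * x⁻¹) * x := by group
          rw [hc1] at h3
          rw [h3]
          calc x⁻¹ * σ * x = x⁻¹ * (σ * x) := by rw [mul_assoc]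
            _ = x⁻¹ * (x * σ) := by rw [← hcom.eq]
            _ = σ := by group
        rw [this]; exact Subgroup.mem_zpowers _

end Aux

/-- for a non-square `f ∈ K*` (char K ≠ 2) and
`σ = [[0, f], [1, 0]] ∈ PGL(2, K)`, the normalizer of `⟨σ⟩` consists exactly of
the classes of matrices of the form `[[a, bf], [b, a]]` or `[[a, -bf], [b, -a]]`
(the condition `(a, b) ≠ (0, 0)` being automatic from invertibility). -/
theorem normalizer_sigma_description {K : Type*} [Field K] (h2 : (2 : K) ≠ 0)
    (f : Kˣ) (hf : ¬ IsSquare f) (x : PGL2 K) :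
    x ∈ Subgroup.normalizer (Subgroup.zpowers (sigmaPGL f)) ↔
      ∃ (g : GL (Fin 2) K) (a b : K),
        (QuotientGroup.mk g : PGL2 K) = x ∧
        ((g : Matrix (Fin 2) (Fin 2) K) = !![a, b * f; b, a] ∨
          (g : Matrix (Fin 2) (Fin 2) K) = !![a, -(b * f); b, -a]) := by
  obtain ⟨g0, rfl⟩ := QuotientGroup.mk_surjective x
  set S : GL (Fin 2) K := Matrix.GeneralLinearGroup.mkOfDetNeZero !![0, (f : K); 1, 0]
    (by simp [Matrix.det_fin_two_of]) with hS
  have hSval : (S : Matrix (Fin 2) (Fin 2) K) = !![0, (f : K); 1, 0] := rfl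
  have hsig : sigmaPGL f = QuotientGroup.mk S := rfl
  have hfne : (f : K) ≠ 0 := f.ne_zero
  have hsq : sigmaPGL f * sigmaPGL f = 1 := by
    rw [hsig, ← QuotientGroup.mk_mul, ← QuotientGroup.mk_one, aux_mk_eq_mk_iff]
    refine ⟨(f : K)⁻¹, inv_ne_zero hfne, ?_⟩
    rw [Units.val_one, Units.val_mul, hSval]
    ext i j
    fin_cases i <;> fin_cases j <;>
      simp [Matrix.mul_apply, Fin.sum_univ_two, Matrix.one_apply, inv_mul_cancel₀ hfne]
  have hne : sigmaPGL f ≠ 1 := by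
    rw [hsig, ← QuotientGroup.mk_one, Ne, aux_mk_eq_mk_iff]
    rintro ⟨c, hc0, hcv⟩
    have h01 := congrFun (congrFun hcv 0) 1
    simp [hSval, Units.val_one, Matrix.one_apply, hfne] at h01
    exact hc0 h01
  rw [aux_norm_iff hsq hne, hsig, ← QuotientGroup.mk_mul, ← QuotientGroup.mk_mul,
    aux_mk_eq_mk_iff]
  constructor
  · rintro ⟨c, hc0, hcv⟩
    rw [Units.val_mul, Units.val_mul, hSval] at hcv
    set M : Matrix (Fin 2) (Fin 2) K := (g0 : Matrix (Fin 2) (Fin 2) K) with hM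
    have hdetM : M.det ≠ 0 := ((Matrix.isUnit_iff_isUnit_det M).mp g0.isUnit).ne_zero
    have hd := congrArg Matrix.det hcv
    rw [Matrix.det_mul, Matrix.det_smul, Matrix.det_mul] at hd
    simp only [Fintype.card_fin, smul_eq_mul] at hd
    have hdS : (!![0, (f : K); 1, 0]).det = -(f : K) := by simp [Matrix.det_fin_two_of]
    rw [hdS] at hd
    -- hd : -f * M.det = c ^ 2 * (M.det * -f)
    have hfac : (c ^ 2 - 1) * (M.det * (f : K)) = 0 := by linear_combination hd
    have hdet : c ^ 2 = 1 := by
      rcases mul_eq_zero.mp hfac with h | h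
      · linear_combination h
      · exact absurd h (mul_ne_zero hdetM hfne)
    have e3 := congrFun (congrFun hcv 1) 0
    have e4 := congrFun (congrFun hcv 1) 1
    simp [Matrix.mul_apply, Fin.sum_univ_two] at e3 e4
    -- e3 : M 0 0 = c * M 1 1 ; e4 : M 0 1 = c * (M 1 0 * f)
    have hcc : c = 1 ∨ c = -1 := by
      have h5 : (c - 1) * (c + 1) = 0 := by linear_combination hdet
      rcases mul_eq_zero.mp h5 with h | h
      · left; linear_combination h
      · right; linear_combination h
    refine ⟨g0, M 0 0, M 1 0, rfl, ?_⟩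
    rcases hcc with rfl | rfl
    · left
      ext i j
      fin_cases i <;> fin_cases j <;> simp [← hM] <;>
        first
          | linear_combination e4
          | linear_combination e3
          | linear_combination -e3
          | linear_combination -e4
    · right
      ext i j
      fin_cases i <;> fin_cases j <;> simp [← hM] <;>
        first
          | linear_combination e4
          | linear_combination e3
          | linear_combination -e3
          | linear_combination -e4
  · rintro ⟨g, a, b, hg, hform⟩
    obtain ⟨c, hc0, hcv⟩ := (aux_mk_eq_mk_iff g0 g).mp hg.symm
    have hg0 : (g0 : Matrix (Fin 2) (Fin 2) K) = c⁻¹ • (g : Matrix (Fin 2) (Fin 2) K) := by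
      rw [hcv, smul_smul, inv_mul_cancel₀ hc0, one_smul]
    rcases hform with hgv | hgv
    · refine ⟨1, one_ne_zero, ?_⟩
      rw [Units.val_mul, Units.val_mul, hSval, one_smul]
      have key : (!![0, (f : K); 1, 0] : Matrix (Fin 2) (Fin 2) K) * (g : Matrix (Fin 2) (Fin 2) K)
          = (g : Matrix (Fin 2) (Fin 2) K) * !![0, (f : K); 1, 0] := by
        rw [hgv]
        ext i j
        fin_cases i <;> fin_cases j <;> simp [Matrix.mul_apply, Fin.sum_univ_two, mul_comm]
      rw [hg0, mul_smul_comm, key, smul_mul_assoc]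
    · refine ⟨-1, neg_ne_zero.mpr one_ne_zero, ?_⟩
      rw [Units.val_mul, Units.val_mul, hSval]
      have key : (!![0, (f : K); 1, 0] : Matrix (Fin 2) (Fin 2) K) * (g : Matrix (Fin 2) (Fin 2) K)
          = (-1 : K) • ((g : Matrix (Fin 2) (Fin 2) K) * !![0, (f : K); 1, 0]) := by
        rw [hgv]
        ext i j
        fin_cases i <;> fin_cases j <;> simp [Matrix.mul_apply, Fin.sum_univ_two, mul_comm]
      rw [hg0, mul_smul_comm, key, smul_mul_assoc, smul_comm]
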